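/- Let M1 be an m×n1 real matrix and M2 an m×n2 real matrix, and define the orthogonal projectors P1 = I - M1 M1⁺ and P2 = I - M2 M2⁺ (where ⁺ denotes the Moore–Penrose pseudoinverse). Then the pseudoinverse of the block matrix [M1 M2] equals the block matrix stacking (P2 M1)⁺ over (P1 M2)⁺ if and only if the column spaces of M1 and M2 intersect trivially, i.e., range(M1) ∩ range(M2) = {0}. -/

import Mathlib

open Matrix

/-- `B` is the Moore–Penrose pseudoinverse of `A`. -/
def IsMoorePenrose {m n : Type*} [Fintype m] [Fintype n]
    (A : Matrix m n ℝ) (B : Matrix n m ℝ) : Prop :=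
  A * B * A = A ∧ B * A * B = B ∧ (A * B)ᵀ = A * B ∧ (B * A)ᵀ = B * A

section Helpers

variable {m n : Type*} [Fintype m] [Fintype n]

lemma mp_fac {A : Matrix m n ℝ} {B : Matrix n m ℝ} (h : IsMoorePenrose A B) :
    B = B * Bᵀ * Aᵀ := by
  conv_lhs => rw [← h.2.1]
  rw [Matrix.mul_assoc, ← h.2.2.1, Matrix.transpose_mul, ← Matrix.mul_assoc]

end Helpers

section Keys

variable {m n1 n2 : Type*} [Fintype m] [Fintype n1] [Fintype n2] [DecidableEq m] [DecidableEq n1]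
variable (M1 : Matrix m n1 ℝ) (M2 : Matrix m n2 ℝ)
variable (M2p : Matrix n2 m ℝ) (Q1 : Matrix n1 m ℝ)

lemma key_PP (h2 : IsMoorePenrose M2 M2p) :
    (1 - M2 * M2p) * (1 - M2 * M2p) = 1 - M2 * M2p := by
  have hidem : (M2 * M2p) * (M2 * M2p) = M2 * M2p := by
    rw [← Matrix.mul_assoc, h2.1]
  rw [Matrix.sub_mul, Matrix.one_mul, Matrix.mul_sub, Matrix.mul_one, hidem, sub_self, sub_zero]

lemma key_QP (h2 : IsMoorePenrose M2 M2p) (hQ1 : IsMoorePenrose ((1 - M2 * M2p) * M1) Q1) :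
    Q1 * (1 - M2 * M2p) = Q1 := by
  have hsym : (M2 * M2p)ᵀ = M2 * M2p := h2.2.2.1
  conv_lhs => rw [mp_fac hQ1]
  conv_rhs => rw [mp_fac hQ1]
  rw [Matrix.transpose_mul, transpose_sub, transpose_one, hsym]
  simp only [Matrix.mul_assoc]
  rw [key_PP M2 M2p h2]

lemma key_QM (h2 : IsMoorePenrose M2 M2p) (hQ1 : IsMoorePenrose ((1 - M2 * M2p) * M1) Q1) :
    Q1 * M2 = 0 := by
  have hPM : (1 - M2 * M2p) * M2 = 0 := by
    rw [Matrix.sub_mul, Matrix.one_mul, h2.1, sub_self]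
  calc Q1 * M2 = Q1 * (1 - M2 * M2p) * M2 := by rw [key_QP M1 M2 M2p Q1 h2 hQ1]
    _ = Q1 * ((1 - M2 * M2p) * M2) := by rw [Matrix.mul_assoc]
    _ = 0 := by rw [hPM, Matrix.mul_zero]

lemma key_QS (h2 : IsMoorePenrose M2 M2p) (hQ1 : IsMoorePenrose ((1 - M2 * M2p) * M1) Q1)
    (S : Matrix m m ℝ) (hS1 : M1ᵀ * S = M1ᵀ) (hS2 : M2ᵀ * S = M2ᵀ) :
    Q1 * S = Q1 := by
  have hinner : M1ᵀ * ((1 - M2pᵀ * M2ᵀ) * S) = M1ᵀ * (1 - M2pᵀ * M2ᵀ) := by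
    rw [Matrix.sub_mul, Matrix.one_mul, Matrix.mul_sub, Matrix.mul_sub, Matrix.mul_one, hS1]
    rw [Matrix.mul_assoc M2pᵀ, hS2]
  conv_lhs => rw [mp_fac hQ1]
  conv_rhs => rw [mp_fac hQ1]
  rw [Matrix.transpose_mul, transpose_sub, transpose_one, Matrix.transpose_mul]
  simp only [Matrix.mul_assoc]
  rw [hinner]

lemma key_MQM (h2 : IsMoorePenrose M2 M2p) (hQ1 : IsMoorePenrose ((1 - M2 * M2p) * M1) Q1)
    (hbot : LinearMap.range M1.mulVecLin ⊓ LinearMap.range M2.mulVecLin = ⊥) :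
    M1 * Q1 * M1 = M1 := by
  have h11 := hQ1.1
  have hPD : (1 - M2 * M2p) * (M1 * (Q1 * ((1 - M2 * M2p) * M1)) - M1) = 0 := by
    rw [Matrix.mul_sub, sub_eq_zero]
    simp only [← Matrix.mul_assoc]
    simp only [← Matrix.mul_assoc] at h11
    exact h11
  have hD2 : (M1 * (Q1 * ((1 - M2 * M2p) * M1)) - M1)
      = M2 * M2p * (M1 * (Q1 * ((1 - M2 * M2p) * M1)) - M1) := by
    have h := hPD
    rw [Matrix.sub_mul, Matrix.one_mul, sub_eq_zero] at h
    exact h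
  have hD0 : M1 * (Q1 * ((1 - M2 * M2p) * M1)) - M1 = 0 := by
    have hcol : ∀ w, (M1 * (Q1 * ((1 - M2 * M2p) * M1)) - M1) *ᵥ w = 0 := by
      intro w
      have hmem1 : (M1 * (Q1 * ((1 - M2 * M2p) * M1)) - M1) *ᵥ w
          ∈ LinearMap.range M1.mulVecLin := by
        refine ⟨(Q1 * ((1 - M2 * M2p) * M1) - 1) *ᵥ w, ?_⟩
        rw [Matrix.mulVecLin_apply, Matrix.mulVec_mulVec, Matrix.mul_sub, Matrix.mul_one]
      have hmem2 : (M1 * (Q1 * ((1 - M2 * M2p) * M1)) - M1) *ᵥ w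
          ∈ LinearMap.range M2.mulVecLin := by
        refine ⟨(M2p * (M1 * (Q1 * ((1 - M2 * M2p) * M1)) - M1)) *ᵥ w, ?_⟩
        rw [Matrix.mulVecLin_apply, Matrix.mulVec_mulVec, ← Matrix.mul_assoc, ← hD2]
      have hm : (M1 * (Q1 * ((1 - M2 * M2p) * M1)) - M1) *ᵥ w
          ∈ LinearMap.range M1.mulVecLin ⊓ LinearMap.range M2.mulVecLin := ⟨hmem1, hmem2⟩
      rw [hbot] at hm
      simpa using hm
    ext i j
    have h := congrFun (hcol (Pi.single j 1)) i
    rwa [Matrix.mulVec_single_one] at h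
  have hQ1M1 : Q1 * M1 = Q1 * ((1 - M2 * M2p) * M1) := by
    conv_lhs => rw [← key_QP M1 M2 M2p Q1 h2 hQ1, Matrix.mul_assoc]
  rw [Matrix.mul_assoc, hQ1M1, ← sub_eq_zero]
  exact hD0

end Keys

section Main

variable {m n1 n2 : Type*} [Fintype m] [Fintype n1] [Fintype n2]
variable [DecidableEq m] [DecidableEq n1] [DecidableEq n2]

lemma key_main (M1 : Matrix m n1 ℝ) (M2 : Matrix m n2 ℝ)
    (M1p : Matrix n1 m ℝ) (M2p : Matrix n2 m ℝ)
    (h1 : IsMoorePenrose M1 M1p) (h2 : IsMoorePenrose M2 M2p)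
    (Q1 : Matrix n1 m ℝ) (Q2 : Matrix n2 m ℝ)
    (hQ1 : IsMoorePenrose ((1 - M2 * M2p) * M1) Q1)
    (hQ2 : IsMoorePenrose ((1 - M1 * M1p) * M2) Q2)
    (hbot : LinearMap.range M1.mulVecLin ⊓ LinearMap.range M2.mulVecLin = ⊥) :
    IsMoorePenrose (Matrix.fromCols M1 M2) (Matrix.fromRows Q1 Q2) := by
  have hQ1M2 : Q1 * M2 = 0 := key_QM M1 M2 M2p Q1 h2 hQ1
  have hQ2M1 : Q2 * M1 = 0 := key_QM M2 M1 M1p Q2 h1 hQ2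
  have hQ1M1 : Q1 * M1 = Q1 * ((1 - M2 * M2p) * M1) := by
    conv_lhs => rw [← key_QP M1 M2 M2p Q1 h2 hQ1, Matrix.mul_assoc]
  have hQ2M2 : Q2 * M2 = Q2 * ((1 - M1 * M1p) * M2) := by
    conv_lhs => rw [← key_QP M2 M1 M1p Q2 h1 hQ2, Matrix.mul_assoc]
  have hM1Q1M1 : M1 * Q1 * M1 = M1 := key_MQM M1 M2 M2p Q1 h2 hQ1 hbot
  have hM2Q2M2 : M2 * Q2 * M2 = M2 :=
    key_MQM M2 M1 M1p Q2 h1 hQ2 (by rwa [inf_comm] at hbot)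
  have hXM1 : (M1 * Q1 + M2 * Q2) * M1 = M1 := by
    rw [Matrix.add_mul, hM1Q1M1, Matrix.mul_assoc M2, hQ2M1, Matrix.mul_zero, add_zero]
  have hXM2 : (M1 * Q1 + M2 * Q2) * M2 = M2 := by
    rw [Matrix.add_mul, Matrix.mul_assoc M1, hQ1M2, Matrix.mul_zero, zero_add, hM2Q2M2]
  have hS1M1 : (M2 * M2p + (1 - M2 * M2p) * M1 * Q1) * M1 = M1 := by
    rw [Matrix.add_mul, Matrix.mul_assoc ((1 - M2 * M2p) * M1), hQ1M1, ← Matrix.mul_assoc,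
      hQ1.1, Matrix.sub_mul, Matrix.one_mul]
    abel
  have hS1M2 : (M2 * M2p + (1 - M2 * M2p) * M1 * Q1) * M2 = M2 := by
    rw [Matrix.add_mul, h2.1, Matrix.mul_assoc ((1 - M2 * M2p) * M1), hQ1M2,
      Matrix.mul_zero, add_zero]
  have hS1sym : (M2 * M2p + (1 - M2 * M2p) * M1 * Q1)ᵀ
      = M2 * M2p + (1 - M2 * M2p) * M1 * Q1 := by
    rw [transpose_add, h2.2.2.1, hQ1.2.2.1]
  have hM1tS1 : M1ᵀ * (M2 * M2p + (1 - M2 * M2p) * M1 * Q1) = M1ᵀ := by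
    conv_lhs => rw [← hS1sym]
    rw [← Matrix.transpose_mul, hS1M1]
  have hM2tS1 : M2ᵀ * (M2 * M2p + (1 - M2 * M2p) * M1 * Q1) = M2ᵀ := by
    conv_lhs => rw [← hS1sym]
    rw [← Matrix.transpose_mul, hS1M2]
  have hQ1S1 : Q1 * (M2 * M2p + (1 - M2 * M2p) * M1 * Q1) = Q1 :=
    key_QS M1 M2 M2p Q1 h2 hQ1 _ hM1tS1 hM2tS1
  have hQ2S1 : Q2 * (M2 * M2p + (1 - M2 * M2p) * M1 * Q1) = Q2 :=
    key_QS M2 M1 M1p Q2 h1 hQ2 _ hM2tS1 hM1tS1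
  have hXS1 : (M1 * Q1 + M2 * Q2) * (M2 * M2p + (1 - M2 * M2p) * M1 * Q1)
      = M1 * Q1 + M2 * Q2 := by
    rw [Matrix.add_mul, Matrix.mul_assoc M1, hQ1S1, Matrix.mul_assoc M2, hQ2S1]
  have hXE2 : (M1 * Q1 + M2 * Q2) * (M2 * M2p) = M2 * M2p := by
    rw [← Matrix.mul_assoc, hXM2]
  have hXN1 : (M1 * Q1 + M2 * Q2) * ((1 - M2 * M2p) * M1) = (1 - M2 * M2p) * M1 := by
    have hEM1 : (1 - M2 * M2p) * M1 = M1 - M2 * M2p * M1 := by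
      rw [Matrix.sub_mul, Matrix.one_mul]
    rw [hEM1, Matrix.mul_sub, hXM1, ← Matrix.mul_assoc, hXE2]
  have hXF1 : (M1 * Q1 + M2 * Q2) * ((1 - M2 * M2p) * M1 * Q1)
      = (1 - M2 * M2p) * M1 * Q1 := by
    rw [← Matrix.mul_assoc, hXN1]
  have hXS1' : (M1 * Q1 + M2 * Q2) * (M2 * M2p + (1 - M2 * M2p) * M1 * Q1)
      = M2 * M2p + (1 - M2 * M2p) * M1 * Q1 := by
    rw [Matrix.mul_add, hXE2, hXF1]
  have hXeq : M1 * Q1 + M2 * Q2 = M2 * M2p + (1 - M2 * M2p) * M1 * Q1 :=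
    hXS1.symm.trans hXS1'
  have hXsym : (M1 * Q1 + M2 * Q2)ᵀ = M1 * Q1 + M2 * Q2 := by
    rw [hXeq]; exact hS1sym
  have hAB : Matrix.fromCols M1 M2 * Matrix.fromRows Q1 Q2 = M1 * Q1 + M2 * Q2 :=
    Matrix.fromCols_mul_fromRows M1 M2 Q1 Q2
  refine ⟨?_, ?_, ?_, ?_⟩
  · rw [hAB, Matrix.mul_fromCols, hXM1, hXM2]
  · rw [Matrix.mul_assoc, hAB, Matrix.fromRows_mul, hXeq, hQ1S1, hQ2S1]
  · rw [hAB]; exact hXsym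
  · rw [Matrix.fromRows_mul_fromCols, hQ1M2, hQ2M1, Matrix.fromBlocks_transpose,
      Matrix.transpose_zero, Matrix.transpose_zero, hQ1M1, hQ2M2, hQ1.2.2.2, hQ2.2.2.2]

end Main

theorem stmt_0 {m n1 n2 : ℕ}
    (M1 : Matrix (Fin m) (Fin n1) ℝ) (M2 : Matrix (Fin m) (Fin n2) ℝ)
    (M1p : Matrix (Fin n1) (Fin m) ℝ) (M2p : Matrix (Fin n2) (Fin m) ℝ)
    (h1 : IsMoorePenrose M1 M1p) (h2 : IsMoorePenrose M2 M2p)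
    (Q1 : Matrix (Fin n1) (Fin m) ℝ) (Q2 : Matrix (Fin n2) (Fin m) ℝ)
    (hQ1 : IsMoorePenrose ((1 - M2 * M2p) * M1) Q1)
    (hQ2 : IsMoorePenrose ((1 - M1 * M1p) * M2) Q2) :
    IsMoorePenrose (Matrix.fromCols M1 M2) (Matrix.fromRows Q1 Q2) ↔
      LinearMap.range M1.mulVecLin ⊓ LinearMap.range M2.mulVecLin = ⊥ := by
  constructor
  · intro hmp
    have hQ1M2 : Q1 * M2 = 0 := key_QM M1 M2 M2p Q1 h2 hQ1
    have hQ2M1 : Q2 * M1 = 0 := key_QM M2 M1 M1p Q2 h1 hQ2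
    have hABA := hmp.1
    rw [Matrix.fromCols_mul_fromRows, Matrix.mul_fromCols] at hABA
    obtain ⟨hXM1, hXM2⟩ := (Matrix.fromCols_ext_iff _ _ _ _).mp hABA
    rw [Submodule.eq_bot_iff]
    intro v hv
    obtain ⟨⟨x, hx⟩, ⟨y, hy⟩⟩ := hv
    rw [Matrix.mulVecLin_apply] at hx hy
    have h1v : (M1 * Q1 + M2 * Q2) *ᵥ v = v := by
      conv_lhs => rw [← hx]
      rw [Matrix.mulVec_mulVec, hXM1, hx]
    have h0v : (M1 * Q1 + M2 * Q2) *ᵥ v = 0 := by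
      rw [Matrix.add_mulVec]
      have e1 : (M1 * Q1) *ᵥ v = 0 := by
        rw [← hy, Matrix.mulVec_mulVec, Matrix.mul_assoc, hQ1M2, Matrix.mul_zero,
          Matrix.zero_mulVec]
      have e2 : (M2 * Q2) *ᵥ v = 0 := by
        rw [← hx, Matrix.mulVec_mulVec, Matrix.mul_assoc, hQ2M1, Matrix.mul_zero,
          Matrix.zero_mulVec]
      rw [e1, e2, add_zero]
    exact h1v.symm.trans h0v
  · intro hbot
    exact key_main M1 M2 M1p M2p h1 h2 Q1 Q2 hQ1 hQ2 hbot
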